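/- Let n ∈ ℕ, let a_1,…,a_n ∈ ℂ with |a_j| > 1 for all j, let w(z) = ∏_{j=1}^n (z − a_j) and let B be the associated Blaschke product. Let 0 < k ≤ 1, let s, m ∈ ℕ with s ≤ m ≤ n, let b_1,…,b_{m−s} ∈ ℂ with |b_j| ≤ k for all j, and let p be the polynomial p(z) = c_s·z^s + c_{s+1}·z^{s+1} + ⋯ + c_m·z^m with c_m ≠ 0 whose zeros are 0 (with multiplicity s) and b_1,…,b_{m−s}, i.e. p(z) = c_m · z^s · ∏_{j=1}^{m−s} (z − b_j); note that |c_s| = |c_m| · ∏_{j=1}^{m−s} |b_j|. Set r(z) = p(z)/w(z). Then for every z ∈ ℂ with |z| = 1, |r′(z)| ≥ (1/2) · { |B′(z)| − n + 2(m + s·k)/(1 + k) + (2k/(k + 1)) · ( (k^{m−s}·|c_m| − |c_s|)/(k^{m−s}·|c_m| + |c_s|) ) } · |r(z)|. -/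

import Mathlib

open Complex ComplexConjugate

lemma aux_f2 {x y : ℝ} (hx0 : 0 ≤ x) (hx1 : x ≤ 1) (hy0 : 0 ≤ y) (hy1 : y ≤ 1) :
    (1 - x*y)/(1 + x*y) ≤ (1-x)/(1+x) + (1-y)/(1+y) := by
  have hx : (0:ℝ) < 1 + x := by linarith
  have hy : (0:ℝ) < 1 + y := by linarith
  have hxy : (0:ℝ) < 1 + x*y := by nlinarith
  rw [div_add_div _ _ (ne_of_gt hx) (ne_of_gt hy), div_le_div_iff₀ hxy (by positivity)]
  nlinarith [mul_nonneg (mul_nonneg (sub_nonneg.2 hx1) (sub_nonneg.2 hy1))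
    (sub_nonneg.2 (by nlinarith : x*y ≤ 1))]

lemma aux_fsum {ι : Type*} (s : Finset ι) (x : ι → ℝ) (h0 : ∀ i ∈ s, 0 ≤ x i)
    (h1 : ∀ i ∈ s, x i ≤ 1) :
    (1 - ∏ i ∈ s, x i)/(1 + ∏ i ∈ s, x i) ≤ ∑ i ∈ s, (1 - x i)/(1 + x i) := by
  induction s using Finset.cons_induction with
  | empty => simp
  | cons a s ha ih =>
    rw [Finset.prod_cons, Finset.sum_cons]
    have hP0 : 0 ≤ ∏ i ∈ s, x i :=
      Finset.prod_nonneg (fun i hi => h0 i (Finset.mem_cons_of_mem hi))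
    have hP1 : ∏ i ∈ s, x i ≤ 1 :=
      Finset.prod_le_one (fun i hi => h0 i (Finset.mem_cons_of_mem hi))
        (fun i hi => h1 i (Finset.mem_cons_of_mem hi))
    have h2 := aux_f2 (h0 a (Finset.mem_cons_self a s)) (h1 a (Finset.mem_cons_self a s)) hP0 hP1
    have h3 := ih (fun i hi => h0 i (Finset.mem_cons_of_mem hi))
      (fun i hi => h1 i (Finset.mem_cons_of_mem hi))
    linarith

lemma aux_re_pole {z a : ℂ} (hz : normSq z = 1) (hza : z ≠ a) :
    (z / (z - a)).re = 1/2 - (normSq a - 1)/(2 * normSq (z - a)) := by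
  have h : z - a ≠ 0 := sub_ne_zero.2 hza
  have hn : 0 < normSq (z - a) := normSq_pos.2 h
  rw [div_re, ← add_div]
  have hnum : z.re * (z-a).re + z.im * (z-a).im = 1 - (z.re*a.re + z.im*a.im) := by
    simp only [sub_re, sub_im, normSq_apply] at hz ⊢
    linear_combination hz
  have hN : normSq (z - a) = 1 - 2*(z.re*a.re + z.im*a.im) + normSq a := by
    simp only [normSq_apply, sub_re, sub_im] at hz ⊢
    linear_combination hz
  rw [hnum]
  field_simp
  rw [hN]
  ring

lemma aux_re_zero {z b : ℂ} (hz : normSq z = 1) (hb : ‖b‖ ≤ 1) (hzb : z ≠ b) :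
    1/(1 + ‖b‖) ≤ (z / (z - b)).re := by
  have h : z - b ≠ 0 := sub_ne_zero.2 hzb
  have hn : 0 < normSq (z - b) := normSq_pos.2 h
  have habz : ‖z‖ = 1 := by
    rw [← Complex.sq_norm] at hz; nlinarith [norm_nonneg z]
  set t := ‖b‖ with ht
  have ht0 : 0 ≤ t := norm_nonneg b
  have ht2 : t^2 = normSq b := Complex.sq_norm b
  have hc : |(z.re*b.re + z.im*b.im)| ≤ t := by
    have h1 := Complex.abs_re_le_norm (z * conj b)
    simpa [Complex.mul_re, Complex.conj_re, Complex.conj_im, map_mul, habz, mul_comm] using h1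
  have hc' : -(t) ≤ z.re*b.re + z.im*b.im := neg_le_of_abs_le hc
  rw [div_re, ← add_div]
  have hnum : z.re * (z-b).re + z.im * (z-b).im = 1 - (z.re*b.re + z.im*b.im) := by
    simp only [sub_re, sub_im, normSq_apply] at hz ⊢
    linear_combination hz
  rw [hnum, div_le_div_iff₀ (by linarith) hn]
  have hN : normSq (z - b) = 1 - 2*(z.re*b.re + z.im*b.im) + t^2 := by
    simp only [normSq_apply, sub_re, sub_im] at hz ht2 ⊢
    linear_combination hz - ht2
  nlinarith [mul_nonneg (sub_nonneg.2 hb) (by linarith : 0 ≤ t + (z.re*b.re + z.im*b.im))]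

lemma aux_per_zero {t k : ℝ} (ht0 : 0 ≤ t) (htk : t ≤ k) (hk0 : 0 < k) (hk1 : k ≤ 1) :
    1/(1+k) + (k/(1+k)) * ((k-t)/(k+t)) ≤ 1/(1+t) := by
  have h1 : (0:ℝ) < 1 + k := by linarith
  have h2 : (0:ℝ) < 1 + t := by linarith
  have h3 : (0:ℝ) < k + t := by linarith
  rw [div_mul_div_comm, div_add_div _ _ (ne_of_gt h1) (by positivity : (1+k)*(k+t) ≠ 0),
    div_le_div_iff₀ (by positivity) h2]
  ring_nf
  nlinarith [mul_nonneg (mul_nonneg (sub_nonneg.2 htk) ht0) (sub_nonneg.2 hk1)]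

lemma aux_mul_ofReal_re (x : ℂ) (r : ℝ) : (x * (r:ℂ)).re = x.re * r := by
  simp [Complex.mul_re]

set_option maxHeartbeats 2000000 in
theorem turan_rational_sfold_zeros_coeff
    (n : ℕ) (a : Fin n → ℂ) (ha : ∀ j, 1 < ‖a j‖)
    (w B : ℂ → ℂ)
    (hw : ∀ z, w z = ∏ j, (z - a j))
    (hB : ∀ z, B z = ∏ j, (1 - (starRingEnd ℂ) (a j) * z) / (z - a j))
    (k : ℝ) (hk0 : 0 < k) (hk1 : k ≤ 1)
    (s m : ℕ) (hsm : s ≤ m) (hmn : m ≤ n)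
    (cm : ℂ) (hcm : cm ≠ 0)
    (b : Fin (m - s) → ℂ) (hb : ∀ j, ‖b j‖ ≤ k)
    (p r : ℂ → ℂ)
    (hp : ∀ z, p z = cm * z ^ s * ∏ j, (z - b j))
    (hr : ∀ z, r z = p z / w z)
    (cs : ℂ) (hcs : cs = cm * ∏ j, (-(b j)))
    (z : ℂ) (hz : ‖z‖ = 1) :
    ‖deriv r z‖ ≥
      (1 / 2) * (‖deriv B z‖ - (n : ℝ)
        + 2 * ((m : ℝ) + (s : ℝ) * k) / (1 + k)
        + (2 * k / (k + 1)) *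
          ((k ^ (m - s) * ‖cm‖ - ‖cs‖) /
            (k ^ (m - s) * ‖cm‖ + ‖cs‖)))
        * ‖r z‖ := by
  classical
  have hzsq : normSq z = 1 := by rw [← Complex.sq_norm, hz]; norm_num
  have hz0 : z ≠ 0 := by intro h; rw [h] at hz; simp at hz
  have hzc : z * conj z = 1 := by rw [mul_conj, hzsq]; simp
  -- pole factors
  have hwf : ∀ j, z - a j ≠ 0 := by
    intro j h
    have h2 := ha j
    rw [sub_eq_zero] at h
    rw [← h, hz] at h2
    exact lt_irrefl 1 h2
  have hza : ∀ j, z ≠ a j := fun j => sub_ne_zero.mp (hwf j)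
  set W : ℂ := ∏ j, (z - a j) with hWdef
  have hWne : W ≠ 0 := Finset.prod_ne_zero_iff.2 fun j _ => hwf j
  have hwz : w z = W := hw z
  have hwfun : w = fun y => ∏ j, (y - a j) := funext hw
  set W' : ℂ := ∑ i, ∏ j ∈ Finset.univ.erase i, (z - a j) with hW'def
  have hdw0 : HasDerivAt (fun y => ∏ j, (y - a j)) W' z := by
    have h := HasDerivAt.fun_finsetProd (u := Finset.univ) (𝕜 := ℂ)
      (f := fun (i : Fin n) (y : ℂ) => y - a i) (f' := fun _ => 1) (x := z)
      (fun i _ => (hasDerivAt_id z).sub_const (a i))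
    simpa using h
  have hdw : HasDerivAt w W' z := by rw [hwfun]; exact hdw0
  -- Q and B
  set Q : ℂ := ∏ j, (1 - conj (a j) * z) with hQdef
  set Q' : ℂ := ∑ i, (∏ j ∈ Finset.univ.erase i, (1 - conj (a j) * z)) * (-conj (a i)) with hQ'def
  have hdq : HasDerivAt (fun y => ∏ j, (1 - conj (a j) * y)) Q' z := by
    have h := HasDerivAt.fun_finsetProd (u := Finset.univ) (𝕜 := ℂ)
      (f := fun (i : Fin n) (y : ℂ) => 1 - conj (a i) * y) (f' := fun i => -conj (a i)) (x := z)
      (fun i _ => by simpa using ((hasDerivAt_id z).const_mul (conj (a i))).const_sub 1)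
    simpa only [hQ'def, smul_eq_mul] using h
  have hBfun : B = fun y => (∏ j, (1 - conj (a j) * y)) / (∏ j, (y - a j)) := by
    funext y; rw [hB y, Finset.prod_div_distrib]
  have hdB : HasDerivAt B ((Q' * W - Q * W') / W ^ 2) z := by
    rw [hBfun]; exact hdq.div hdw0 hWne
  -- normSq facts
  have hna : ∀ i, 1 < normSq (a i) := by
    intro i
    rw [← Complex.sq_norm]
    nlinarith [ha i, norm_nonneg (a i)]
  have hnwf : ∀ j, 0 < normSq (z - a j) := fun j => normSq_pos.2 (hwf j)
  set S : ℝ := ∑ i, (normSq (a i) - 1) / normSq (z - a i) with hSdef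
  -- |B'| ≤ S
  have hQW : Q' * W - Q * W' = ∑ i, ((normSq (a i) - 1 : ℝ) : ℂ) *
      ∏ j ∈ Finset.univ.erase i, ((1 - conj (a j) * z) * (z - a j)) := by
    rw [hQ'def, hW'def, hWdef, hQdef, Finset.sum_mul, Finset.mul_sum, ← Finset.sum_sub_distrib]
    refine Finset.sum_congr rfl fun i _ => ?_
    rw [Finset.prod_mul_distrib,
      ← Finset.mul_prod_erase Finset.univ (fun j => z - a j) (Finset.mem_univ i),
      ← Finset.mul_prod_erase Finset.univ (fun j => 1 - conj (a j) * z) (Finset.mem_univ i)]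
    have hcm2 : ((normSq (a i) - 1 : ℝ) : ℂ) = -conj (a i) * (z - a i) - (1 - conj (a i) * z) := by
      have h1 : a i * conj (a i) = (normSq (a i) : ℂ) := mul_conj (a i)
      push_cast
      linear_combination -h1
    linear_combination (-((∏ j ∈ Finset.univ.erase i, (1 - conj (a j) * z)) *
      (∏ j ∈ Finset.univ.erase i, (z - a j)))) * hcm2
  have hQfabs : ∀ j : Fin n, ‖1 - conj (a j) * z‖ = ‖z - a j‖ := by
    intro j
    have e : 1 - conj (a j) * z = z * conj (z - a j) := by
      rw [map_sub, mul_sub, hzc]; ring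
    rw [e, norm_mul, Complex.norm_conj, hz, one_mul]
  have habsW : ‖W‖ ^ 2 = ∏ j, normSq (z - a j) := by
    rw [hWdef, norm_prod, ← Finset.prod_pow]
    exact Finset.prod_congr rfl fun j _ => Complex.sq_norm _
  have hprodpos : 0 < ∏ j, normSq (z - a j) := Finset.prod_pos fun j _ => hnwf j
  have habsB : ‖deriv B z‖ ≤ S := by
    rw [hdB.deriv, norm_div, norm_pow, habsW, div_le_iff₀ hprodpos]
    have h1 : ‖Q' * W - Q * W'‖ ≤
        ∑ i, (normSq (a i) - 1) * ∏ j ∈ Finset.univ.erase i, normSq (z - a j) := by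
      rw [hQW]
      refine (norm_sum_le _ _).trans (le_of_eq (Finset.sum_congr rfl fun i _ => ?_))
      simp only [norm_mul, Complex.norm_real, Real.norm_eq_abs, norm_prod]
      rw [_root_.abs_of_nonneg (by linarith [hna i] : (0:ℝ) ≤ normSq (a i) - 1)]
      congr 1
      refine Finset.prod_congr rfl fun j _ => ?_
      rw [hQfabs j, ← Complex.sq_norm, sq]
    refine h1.trans (le_of_eq ?_)
    rw [hSdef, Finset.sum_mul]
    refine Finset.sum_congr rfl fun i _ => ?_
    rw [← Finset.mul_prod_erase Finset.univ (fun j => normSq (z - a j)) (Finset.mem_univ i),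
      div_mul_eq_mul_div, mul_comm (normSq (z - a i)), ← mul_assoc, mul_div_assoc,
      div_self (ne_of_gt (hnwf i)), mul_one]
  -- pole sum identity
  have hSa : ∑ i, (z / (z - a i)).re = (n : ℝ)/2 - S/2 := by
    have e1 : ∀ i : Fin n, (z / (z - a i)).re
        = 1/2 - ((normSq (a i) - 1) / normSq (z - a i))/2 := by
      intro i
      rw [aux_re_pole hzsq (hza i)]
      rw [div_div]
      ring_nf
    rw [Finset.sum_congr rfl (fun i _ => e1 i), Finset.sum_sub_distrib, Finset.sum_const,
      Finset.card_univ, Fintype.card_fin, ← Finset.sum_div, ← hSdef, nsmul_eq_mul]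
    ring
  -- case split
  by_cases hp0 : p z = 0
  · have hr0 : r z = 0 := by rw [hr z, hp0, zero_div]
    rw [hr0, norm_zero, mul_zero]
    exact norm_nonneg _
  · have hbf : ∀ j, z - b j ≠ 0 := by
      intro j h
      exact hp0 (by rw [hp z, Finset.prod_eq_zero (Finset.mem_univ j) h, mul_zero])
    set Pb : ℂ := ∏ j, (z - b j) with hPbdef
    have hP : p z = cm * z ^ s * Pb := hp z
    set P' : ℂ := cm * ((s:ℂ) * z^(s-1) * Pb
      + z^s * ∑ i, ∏ j ∈ Finset.univ.erase i, (z - b j)) with hP'def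
    have hpfun : p = fun y => cm * (y ^ s * ∏ j, (y - b j)) := by
      funext y; rw [hp y, mul_assoc]
    have hdp : HasDerivAt p P' z := by
      rw [hpfun]
      have h2 : HasDerivAt (fun y : ℂ => ∏ j, (y - b j))
          (∑ i, ∏ j ∈ Finset.univ.erase i, (z - b j)) z := by
        have h := HasDerivAt.fun_finsetProd (u := Finset.univ) (𝕜 := ℂ)
          (f := fun (i : Fin (m-s)) (y : ℂ) => y - b i) (f' := fun _ => 1) (x := z)
          (fun i _ => (hasDerivAt_id z).sub_const (b i))
        simpa using h
      have h3 := ((hasDerivAt_pow s z).mul h2).const_mul cm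
      convert h3 using 1
      all_goals rfl
    have hdr : HasDerivAt r ((P' * W - p z * W') / W ^ 2) z := by
      have h := hdp.div hdw (by rw [hwz]; exact hWne)
      rw [hwz] at h
      have hrfun : r = fun y => p y / w y := funext hr
      rw [hrfun]; exact h
    have hzs : z * ((s:ℂ) * z^(s-1)) = (s:ℂ) * z^s := by
      cases s with
      | zero => simp
      | succ t => rw [pow_succ]; push_cast; ring
    have hsum2 : (∑ j, z / (z - b j)) * Pb = ∑ j, z * ∏ l ∈ Finset.univ.erase j, (z - b l) := by
      rw [hPbdef, Finset.sum_mul]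
      refine Finset.sum_congr rfl fun j _ => ?_
      rw [← Finset.mul_prod_erase Finset.univ (fun l => z - b l) (Finset.mem_univ j),
        div_mul_eq_mul_div, mul_comm (z - b j) _, ← mul_assoc, mul_div_assoc,
        div_self (hbf j), mul_one]
    have hmulsum : z * ∑ i, ∏ l ∈ Finset.univ.erase i, (z - b l)
        = ∑ i, z * ∏ l ∈ Finset.univ.erase i, (z - b l) := Finset.mul_sum _ _ _
    have hzP : z * P' = ((s:ℂ) + ∑ j, z / (z - b j)) * p z := by
      rw [hP'def, hP]
      linear_combination cm * Pb * hzs + cm * z^s * hmulsum - cm * z^s * hsum2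
    have hmulsumW : z * ∑ i, ∏ l ∈ Finset.univ.erase i, (z - a l)
        = ∑ i, z * ∏ l ∈ Finset.univ.erase i, (z - a l) := Finset.mul_sum _ _ _
    have hsumW : (∑ j, z / (z - a j)) * W = ∑ j, z * ∏ l ∈ Finset.univ.erase j, (z - a l) := by
      rw [hWdef, Finset.sum_mul]
      refine Finset.sum_congr rfl fun j _ => ?_
      rw [← Finset.mul_prod_erase Finset.univ (fun l => z - a l) (Finset.mem_univ j),
        div_mul_eq_mul_div, mul_comm (z - a j) _, ← mul_assoc, mul_div_assoc,
        div_self (hwf j), mul_one]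
    have hzW : z * W' = (∑ i, z / (z - a i)) * W := by
      rw [hW'def]
      linear_combination hmulsumW - hsumW
    set Sb : ℝ := ∑ j, (z / (z - b j)).re with hSbdef
    have hreP : (z * P' * conj (p z)).re = ((s:ℝ) + Sb) * normSq (p z) := by
      have e : z * P' * conj (p z) = ((s:ℂ) + ∑ j, z / (z - b j)) * ((normSq (p z) : ℝ) : ℂ) := by
        rw [hzP, mul_assoc, mul_conj]
      rw [e, aux_mul_ofReal_re]
      congr 1
      rw [Complex.add_re, Complex.natCast_re, Complex.re_sum, hSbdef]
    have hreW : (z * W' * conj W).re = ((n:ℝ)/2 - S/2) * normSq W := by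
      have e : z * W' * conj W = (∑ i, z / (z - a i)) * ((normSq W : ℝ) : ℂ) := by
        rw [hzW, mul_assoc, mul_conj]
      rw [e, aux_mul_ofReal_re]
      congr 1
      rw [Complex.re_sum, hSa]
    have hDre : ((P' * W - p z * W') * (z * (conj (p z) * conj W))).re
        = (z * P' * conj (p z)).re * normSq W - (z * W' * conj W).re * normSq (p z) := by
      have e1 : (P' * W - p z * W') * (z * (conj (p z) * conj W))
          = (z * P' * conj (p z)) * ((normSq W : ℝ) : ℂ)
            - (z * W' * conj W) * ((normSq (p z) : ℝ) : ℂ) := by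
        linear_combination (z * P' * conj (p z)) * Complex.mul_conj W
          - (z * W' * conj W) * Complex.mul_conj (p z)
      rw [e1, Complex.sub_re, aux_mul_ofReal_re, aux_mul_ofReal_re]
    have hRe_le : (z * P' * conj (p z)).re * normSq W - (z * W' * conj W).re * normSq (p z)
        ≤ ‖P' * W - p z * W'‖ * (‖p z‖ * ‖W‖) := by
      rw [← hDre]
      refine (Complex.re_le_norm _).trans (le_of_eq ?_)
      rw [norm_mul, norm_mul, norm_mul, Complex.norm_conj, Complex.norm_conj, hz, one_mul]
    have ht0 : ∀ j, (0:ℝ) ≤ ‖b j‖ := fun j => norm_nonneg _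
    set Pt : ℝ := ∏ j, ‖b j‖ with hPtdef
    have hPt0 : 0 ≤ Pt := Finset.prod_nonneg fun j _ => ht0 j
    have hkN : (0:ℝ) < k^(m-s) := pow_pos hk0 _
    have key1 : (k^(m-s) - Pt)/(k^(m-s) + Pt)
        ≤ ∑ j, (k - ‖b j‖)/(k + ‖b j‖) := by
      have h := aux_fsum Finset.univ (fun j => ‖b j‖ / k)
        (fun j _ => div_nonneg (ht0 j) hk0.le)
        (fun j _ => (div_le_one hk0).2 (hb j))
      have e2 : ∏ j, (‖b j‖ / k) = Pt / k^(m-s) := by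
        rw [Finset.prod_div_distrib, Finset.prod_const, Finset.card_univ, Fintype.card_fin,
          hPtdef]
      have e3 : (1 - Pt/k^(m-s))/(1 + Pt/k^(m-s)) = (k^(m-s) - Pt)/(k^(m-s) + Pt) := by
        rw [div_eq_div_iff (by nlinarith [div_nonneg hPt0 hkN.le] : (0:ℝ) < 1 + Pt/k^(m-s)).ne'
          (by linarith : (0:ℝ) < k^(m-s) + Pt).ne']
        field_simp
      have e1 : ∀ j : Fin (m-s), (1 - ‖b j‖/k)/(1 + ‖b j‖/k)
          = (k - ‖b j‖)/(k + ‖b j‖) := by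
        intro j
        rw [div_eq_div_iff (by nlinarith [div_nonneg (ht0 j) hk0.le] : (0:ℝ) < 1 + ‖b j‖/k).ne'
          (by nlinarith [ht0 j] : (0:ℝ) < k + ‖b j‖).ne']
        field_simp
      rw [e2, e3] at h
      exact h.trans (le_of_eq (Finset.sum_congr rfl fun j _ => e1 j))
    have step2 : (↑(m-s) : ℝ) * (1/(1+k))
        + (k/(1+k)) * ∑ j, (k - ‖b j‖)/(k + ‖b j‖) ≤ Sb := by
      have h : ∑ j : Fin (m-s), (1/(1+k) + (k/(1+k)) * ((k - ‖b j‖)/(k + ‖b j‖)))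
          ≤ ∑ j : Fin (m-s), (z / (z - b j)).re :=
        Finset.sum_le_sum (fun j _ => (aux_per_zero (ht0 j) (hb j) hk0 hk1).trans
          (aux_re_zero hzsq ((hb j).trans hk1) (sub_ne_zero.mp (hbf j))))
      rw [Finset.sum_add_distrib, Finset.sum_const, Finset.card_univ, Fintype.card_fin,
        ← Finset.mul_sum, nsmul_eq_mul] at h
      exact h
    have hSb_ge : ((m:ℝ) - s)/(1+k) + (k/(1+k)) * ((k^(m-s) - Pt)/(k^(m-s) + Pt)) ≤ Sb := by
      have h2 : (k/(1+k)) * ((k^(m-s) - Pt)/(k^(m-s) + Pt))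
          ≤ (k/(1+k)) * ∑ j, (k - ‖b j‖)/(k + ‖b j‖) :=
        mul_le_mul_of_nonneg_left key1 (by positivity)
      have ecast : ((m - s : ℕ) : ℝ) = (m:ℝ) - s := by
        rw [Nat.cast_sub hsm]
      have e4 : ((m:ℝ) - s)/(1+k) = (↑(m-s):ℝ) * (1/(1+k)) := by rw [ecast]; ring
      linarith [step2]
    have hcs_abs : ‖cs‖ = ‖cm‖ * Pt := by
      rw [hcs, norm_mul, norm_prod, hPtdef]
      congr 1
      exact Finset.prod_congr rfl fun j _ => norm_neg _
    have hcm0 : (0:ℝ) < ‖cm‖ := norm_pos_iff.2 hcm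
    have hDq : (k^(m-s) * ‖cm‖ - ‖cs‖)
          / (k^(m-s) * ‖cm‖ + ‖cs‖)
        = (k^(m-s) - Pt)/(k^(m-s) + Pt) := by
      rw [hcs_abs,
        show k^(m-s) * ‖cm‖ - ‖cm‖ * Pt = ‖cm‖ * (k^(m-s) - Pt) by ring,
        show k^(m-s) * ‖cm‖ + ‖cm‖ * Pt = ‖cm‖ * (k^(m-s) + Pt) by ring,
        mul_div_mul_left _ _ (ne_of_gt hcm0)]
    have hα : (0:ℝ) < ‖p z‖ := norm_pos_iff.2 hp0
    have hβ : (0:ℝ) < ‖W‖ := norm_pos_iff.2 hWne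
    have hNP : normSq (p z) = ‖p z‖^2 := (Complex.sq_norm _).symm
    have hNW : normSq W = ‖W‖^2 := (Complex.sq_norm _).symm
    set E : ℝ := (s:ℝ) + Sb - ((n:ℝ)/2 - S/2) with hEdef
    have h5 : E * (‖p z‖ * ‖W‖) * (‖p z‖ * ‖W‖)
        ≤ ‖P' * W - p z * W'‖ * (‖p z‖ * ‖W‖) := by
      have h := hRe_le
      rw [hreP, hreW, hNP, hNW] at h
      refine le_trans (le_of_eq ?_) h
      rw [hEdef]; ring
    have hD_ge : E * (‖p z‖ * ‖W‖) ≤ ‖P' * W - p z * W'‖ :=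
      le_of_mul_le_mul_right h5 (mul_pos hα hβ)
    set Cb : ℝ := ‖deriv B z‖ - (n : ℝ)
        + 2 * ((m : ℝ) + (s : ℝ) * k) / (1 + k)
        + (2 * k / (k + 1)) *
          ((k ^ (m - s) * ‖cm‖ - ‖cs‖) /
            (k ^ (m - s) * ‖cm‖ + ‖cs‖)) with hCbdef
    have hC : (1/2) * Cb ≤ E := by
      rw [hCbdef, hDq, hEdef]
      have hk1' : (0:ℝ) < 1 + k := by linarith
      have e1 : (1/2)*(2*((m:ℝ)+(s:ℝ)*k)/(1+k)) = (s:ℝ) + ((m:ℝ)-(s:ℝ))/(1+k) := by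
        field_simp
        ring
      have e2 : (1/2)*((2*k/(k+1)) * ((k^(m-s) - Pt)/(k^(m-s) + Pt)))
          = (k/(1+k)) * ((k^(m-s) - Pt)/(k^(m-s) + Pt)) := by
        ring
      linarith [habsB, hSb_ge]
    have hderivr : ‖deriv r z‖
        = ‖P' * W - p z * W'‖ / ‖W‖^2 := by
      rw [hdr.deriv, norm_div, norm_pow]
    have habsr : ‖r z‖ = ‖p z‖ / ‖W‖ := by
      rw [hr z, norm_div, hwz]
    rw [ge_iff_le, hderivr, habsr]
    have hD2 : (1/2) * Cb * (‖p z‖ * ‖W‖)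
        ≤ ‖P' * W - p z * W'‖ :=
      le_trans (mul_le_mul_of_nonneg_right hC (mul_pos hα hβ).le) hD_ge
    calc (1/2) * Cb * (‖p z‖ / ‖W‖)
        = (1/2) * Cb * (‖p z‖ * ‖W‖) / ‖W‖^2 := by
          field_simp
      _ ≤ ‖P' * W - p z * W'‖ / ‖W‖^2 := by
          gcongr
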